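/- Let ℓ ≥ 5 be an integer and let G be a graph such that every subgraph J of G with at least one vertex satisfies (ℓ−2)·e(J) < (ℓ−1)·v(J) (i.e. m(G) < (ℓ−1)/(ℓ−2)). Let (H₁,…,H_t) be a construction sequence of ℓ-cycles in G. Then there are at most two indices 1 ≤ i ≤ t−1 with |V(H_{i+1}) \ V(H_i)| = 1, i.e. at most two steps of the sequence add exactly one new vertex (configuration (A_{ℓ−1}) appears at most twice). -/

import Mathlib

open SimpleGraph Set
open scoped Fin.NatCast Fin.CommRing

/-- `C` is an `ℓ`-cycle of `G`, given as a subgraph of `G`. -/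
def IsCycleSubgraph {V : Type*} (G : SimpleGraph V) (ℓ : ℕ) (C : G.Subgraph) : Prop :=
  Nonempty (C.coe ≃g SimpleGraph.cycleGraph ℓ)

lemma key_lemma {V : Type*} {G : SimpleGraph V} {ℓ : ℕ} (hℓ : 5 ≤ ℓ)
    {C Hs : G.Subgraph} (hC : IsCycleSubgraph G ℓ C)
    (hne : ¬ C ≤ Hs) (hshare : (C.edgeSet ∩ Hs.edgeSet).Nonempty) :
    ((C.verts \ Hs.verts).ncard + 1 ≤ (C.edgeSet \ Hs.edgeSet).ncard ∧
      (C.edgeSet \ Hs.edgeSet).ncard < ℓ) ∧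
      C.verts.ncard = ℓ ∧ C.edgeSet.ncard = ℓ := by
  classical
  obtain ⟨n, rfl⟩ : ∃ n, ℓ = n + 2 := ⟨ℓ - 2, by omega⟩
  obtain ⟨φ⟩ := hC
  have hn : 3 ≤ n := by omega
  -- vertex enumeration
  set w : Fin (n + 2) → V := fun i => (φ.symm i : V) with hw
  have hwC : ∀ i, w i ∈ C.verts := fun i => (φ.symm i).2
  have hwinj : Function.Injective w := fun i j h =>
    φ.symm.injective (Subtype.val_injective h)
  have hwrange : Set.range w = C.verts := by
    apply Set.eq_of_subset_of_subset
    · rintro _ ⟨i, rfl⟩; exact hwC i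
    · intro v hv
      exact ⟨φ ⟨v, hv⟩, by simp [hw]⟩
  -- adjacency around the cycle
  have hadj : ∀ i : Fin (n + 2), C.Adj (w i) (w (i + 1)) := by
    intro i
    have h1 : (cycleGraph (n + 2)).Adj i (i + 1) := by
      rw [cycleGraph_adj]
      right; exact add_sub_cancel_left i 1
    exact φ.symm.map_adj_iff.mpr h1
  -- edge enumeration
  set E : Fin (n + 2) → Sym2 V := fun i => s(w i, w (i + 1)) with hE
  have hEinj : Function.Injective E := by
    intro i j h
    simp only [hE, Sym2.eq_iff] at h
    rcases h with ⟨h1, _⟩ | ⟨h1, h2⟩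
    · exact hwinj h1
    · exfalso
      have hij : i = j + 1 := hwinj h1
      have hji : j = i + 1 := (hwinj h2).symm
      rw [hij] at hji
      have h2 : j + (1 + 1) = j + 0 := by rw [← add_assoc, ← hji, add_zero]
      have h3 : (1 + 1 : Fin (n + 2)) = 0 := add_left_cancel h2
      have h4 := congrArg Fin.val h3
      rw [Fin.add_def, Fin.val_one', Fin.val_zero] at h4
      have h5 : (1 : ℕ) % (n + 2) = 1 := Nat.mod_eq_of_lt (by omega)
      rw [h5] at h4
      simp only [Fin.val_mk] at h4
      have h6 : (1 + 1 : ℕ) % (n + 2) = 2 := Nat.mod_eq_of_lt (by omega)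
      rw [h6] at h4
      exact two_ne_zero h4
  have hErange : Set.range E = C.edgeSet := by
    apply Set.eq_of_subset_of_subset
    · rintro _ ⟨i, rfl⟩; exact (hadj i)
    · intro e he
      induction e with
      | h u v =>
        have huv : C.Adj u v := he
        have hu : u ∈ C.verts := C.edge_vert huv
        have hv : v ∈ C.verts := C.edge_vert huv.symm
        have hcoe : C.coe.Adj ⟨u, hu⟩ ⟨v, hv⟩ := huv
        have := φ.map_adj_iff.mpr hcoe
        rw [cycleGraph_adj] at this
        rcases this with h1 | h1
        · refine ⟨φ ⟨v, hv⟩, ?_⟩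
          have h2 : φ ⟨u, hu⟩ = φ ⟨v, hv⟩ + 1 := by rw [← h1]; ring
          simp only [hE, hw, ← h2, RelIso.symm_apply_apply]
          exact Sym2.eq_swap
        · refine ⟨φ ⟨u, hu⟩, ?_⟩
          have h2 : φ ⟨v, hv⟩ = φ ⟨u, hu⟩ + 1 := by rw [← h1]; ring
          simp only [hE, hw, ← h2, RelIso.symm_apply_apply]
  -- cardinalities
  have hvcard : C.verts.ncard = n + 2 := by
    rw [← hwrange, ← Nat.card_coe_set_eq, Nat.card_range_of_injective hwinj]
    simp
  have hecard : C.edgeSet.ncard = n + 2 := by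
    rw [← hErange, ← Nat.card_coe_set_eq, Nat.card_range_of_injective hEinj]
    simp
  refine ⟨?_, hvcard, hecard⟩
  -- the set of "old" edge indices
  set S : Finset (Fin (n + 2)) := Finset.univ.filter (fun i => E i ∈ Hs.edgeSet) with hS
  have hmemS : ∀ i, i ∈ S ↔ E i ∈ Hs.edgeSet := by
    intro i; simp [hS]
  have hSne : S.Nonempty := by
    obtain ⟨e, heC, heH⟩ := hshare
    obtain ⟨i, rfl⟩ : e ∈ Set.range E := hErange.symm ▸ heC
    exact ⟨i, (hmemS i).mpr heH⟩
  have hScne : Sᶜ.Nonempty := by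
    by_contra hcontra
    rw [Finset.not_nonempty_iff_eq_empty] at hcontra
    have hall : ∀ i, E i ∈ Hs.edgeSet := by
      intro i
      by_contra hni
      have : i ∈ Sᶜ := Finset.mem_compl.mpr (fun h => hni ((hmemS i).mp h))
      simp [hcontra] at this
    apply hne
    constructor
    · rw [← hwrange]
      rintro _ ⟨i, rfl⟩
      exact Hs.edge_vert (Subgraph.mem_edgeSet.mp (hall i))
    · intro u v huv
      have : s(u, v) ∈ Set.range E := hErange.symm ▸ Subgraph.mem_edgeSet.mpr huv
      obtain ⟨i, hi⟩ := this
      rw [← Subgraph.mem_edgeSet, ← hi]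
      exact hall i
  -- boundary set B and interior set A
  set A : Finset (Fin (n + 2)) := Finset.univ.filter (fun i => i ∉ S ∧ i - 1 ∉ S) with hA
  set B : Finset (Fin (n + 2)) := Finset.univ.filter (fun i => i ∉ S ∧ i - 1 ∈ S) with hB
  have hBne : B.Nonempty := by
    by_contra hBe
    rw [Finset.not_nonempty_iff_eq_empty] at hBe
    obtain ⟨i₀, hi₀⟩ := hScne
    have hi₀' : i₀ ∉ S := Finset.mem_compl.mp hi₀
    have hstep : ∀ k : ℕ, i₀ - (k : Fin (n + 2)) ∉ S := by
      intro k
      induction k with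
      | zero => simpa using hi₀'
      | succ k ih =>
        have hcast : i₀ - ((k + 1 : ℕ) : Fin (n + 2)) = (i₀ - (k : ℕ)) - 1 := by
          push_cast; ring
        rw [hcast]
        intro hmem
        have : (i₀ - (k : Fin (n + 2))) ∈ B := by
          rw [hB, Finset.mem_filter]
          exact ⟨Finset.mem_univ _, ih, hmem⟩
        simp [hBe] at this
    obtain ⟨j₀, hj₀⟩ := hSne
    have : i₀ - (((i₀ - j₀).val : ℕ) : Fin (n + 2)) = j₀ := by
      rw [Fin.cast_val_eq_self]; ring
    apply hstep ((i₀ - j₀).val)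
    rw [this]
    exact hj₀
  have hABdisj : Disjoint A B := by
    rw [Finset.disjoint_left]
    intro i hiA hiB
    rw [hA, Finset.mem_filter] at hiA
    rw [hB, Finset.mem_filter] at hiB
    exact hiA.2.2 hiB.2.2
  have hABsub : A ∪ B ⊆ Sᶜ := by
    intro i hi
    rw [Finset.mem_union] at hi
    rcases hi with h | h
    · rw [hA, Finset.mem_filter] at h; exact Finset.mem_compl.mpr h.2.1
    · rw [hB, Finset.mem_filter] at h; exact Finset.mem_compl.mpr h.2.1
  have hcardAB : A.card + 1 ≤ Sᶜ.card := by
    have := Finset.card_le_card hABsub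
    rw [Finset.card_union_of_disjoint hABdisj] at this
    have := hBne.card_pos
    omega
  -- new vertices are contained in w '' A
  have hNsub : C.verts \ Hs.verts ⊆ w '' ↑A := by
    rintro v ⟨hvC, hvH⟩
    obtain ⟨i, rfl⟩ : v ∈ Set.range w := hwrange.symm ▸ hvC
    refine ⟨i, ?_, rfl⟩
    rw [Finset.mem_coe, hA, Finset.mem_filter]
    refine ⟨Finset.mem_univ _, ?_, ?_⟩
    · intro hiS
      exact hvH (Hs.edge_vert (Subgraph.mem_edgeSet.mp ((hmemS i).mp hiS)))
    · intro hiS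
      have := (hmemS (i - 1)).mp hiS
      rw [hE] at this
      simp only [sub_add_cancel] at this
      exact hvH (Hs.edge_vert (Subgraph.mem_edgeSet.mp this).symm)
  have hacard : (C.verts \ Hs.verts).ncard ≤ A.card := by
    have h1 : (w '' ↑A).ncard = A.card := by
      rw [Set.ncard_image_of_injective _ hwinj, Set.ncard_coe_finset]
    have h2 := Set.ncard_le_ncard hNsub ((A.finite_toSet).image w)
    omega
  -- new edges are exactly E '' Sᶜ
  have hTeq : C.edgeSet \ Hs.edgeSet = E '' ↑(Sᶜ) := by
    apply Set.eq_of_subset_of_subset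
    · rintro e ⟨heC, heH⟩
      obtain ⟨i, rfl⟩ : e ∈ Set.range E := hErange.symm ▸ heC
      exact ⟨i, by simp [Finset.mem_coe, Finset.mem_compl, hmemS, heH], rfl⟩
    · rintro _ ⟨i, hi, rfl⟩
      rw [Finset.mem_coe, Finset.mem_compl] at hi
      exact ⟨hErange ▸ Set.mem_range_self i, fun h => hi ((hmemS i).mpr h)⟩
  have hbcard : (C.edgeSet \ Hs.edgeSet).ncard = Sᶜ.card := by
    rw [hTeq, Set.ncard_image_of_injective _ hEinj, Set.ncard_coe_finset]
  have hSccard : Sᶜ.card < n + 2 := by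
    have h1 : Sᶜ.card = Fintype.card (Fin (n + 2)) - S.card := Finset.card_compl S
    have h2 := hSne.card_pos
    rw [Fintype.card_fin] at h1
    have h3 : S.card ≤ n + 2 := Finset.card_le_card (Finset.subset_univ S) |>.trans (by simp)
    omega
  exact ⟨by omega, by omega⟩

lemma cycle_card {V : Type*} {G : SimpleGraph V} {ℓ : ℕ} (hℓ : 5 ≤ ℓ)
    {C : G.Subgraph} (hC : IsCycleSubgraph G ℓ C) :
    C.verts.ncard = ℓ ∧ C.edgeSet.ncard = ℓ ∧ C.verts.Nonempty := by
  classical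
  obtain ⟨n, rfl⟩ : ∃ n, ℓ = n + 2 := ⟨ℓ - 2, by omega⟩
  obtain ⟨φ⟩ := hC
  set w : Fin (n + 2) → V := fun i => (φ.symm i : V) with hw
  have hwC : ∀ i, w i ∈ C.verts := fun i => (φ.symm i).2
  have hwinj : Function.Injective w := fun i j h =>
    φ.symm.injective (Subtype.val_injective h)
  have hwrange : Set.range w = C.verts := by
    apply Set.eq_of_subset_of_subset
    · rintro _ ⟨i, rfl⟩; exact hwC i
    · intro v hv
      exact ⟨φ ⟨v, hv⟩, by simp [hw]⟩
  have hadj : ∀ i : Fin (n + 2), C.Adj (w i) (w (i + 1)) := by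
    intro i
    have h1 : (cycleGraph (n + 2)).Adj i (i + 1) := by
      rw [cycleGraph_adj]
      right; exact add_sub_cancel_left i 1
    exact φ.symm.map_adj_iff.mpr h1
  set E : Fin (n + 2) → Sym2 V := fun i => s(w i, w (i + 1)) with hE
  have hEinj : Function.Injective E := by
    intro i j h
    simp only [hE, Sym2.eq_iff] at h
    rcases h with ⟨h1, _⟩ | ⟨h1, h2⟩
    · exact hwinj h1
    · exfalso
      have hij : i = j + 1 := hwinj h1
      have hji : j = i + 1 := (hwinj h2).symm
      rw [hij] at hji
      have h2 : j + (1 + 1) = j + 0 := by rw [← add_assoc, ← hji, add_zero]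
      have h3 : (1 + 1 : Fin (n + 2)) = 0 := add_left_cancel h2
      have h4 := congrArg Fin.val h3
      rw [Fin.add_def, Fin.val_one', Fin.val_zero] at h4
      have h5 : (1 : ℕ) % (n + 2) = 1 := Nat.mod_eq_of_lt (by omega)
      rw [h5] at h4
      simp only [Fin.val_mk] at h4
      have h6 : (1 + 1 : ℕ) % (n + 2) = 2 := Nat.mod_eq_of_lt (by omega)
      rw [h6] at h4
      exact absurd h4 two_ne_zero
  have hErange : Set.range E = C.edgeSet := by
    apply Set.eq_of_subset_of_subset
    · rintro _ ⟨i, rfl⟩; exact (hadj i)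
    · intro e he
      induction e with
      | h u v =>
        have huv : C.Adj u v := he
        have hu : u ∈ C.verts := C.edge_vert huv
        have hv : v ∈ C.verts := C.edge_vert huv.symm
        have hcoe : C.coe.Adj ⟨u, hu⟩ ⟨v, hv⟩ := huv
        have := φ.map_adj_iff.mpr hcoe
        rw [cycleGraph_adj] at this
        rcases this with h1 | h1
        · refine ⟨φ ⟨v, hv⟩, ?_⟩
          have h2 : φ ⟨u, hu⟩ = φ ⟨v, hv⟩ + 1 := by rw [← h1]; ring
          simp only [hE, hw, ← h2, RelIso.symm_apply_apply]
          exact Sym2.eq_swap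
        · refine ⟨φ ⟨u, hu⟩, ?_⟩
          have h2 : φ ⟨v, hv⟩ = φ ⟨u, hu⟩ + 1 := by rw [← h1]; ring
          simp only [hE, hw, ← h2, RelIso.symm_apply_apply]
  refine ⟨?_, ?_, ⟨w 0, hwC 0⟩⟩
  · rw [← hwrange, ← Nat.card_coe_set_eq, Nat.card_range_of_injective hwinj]
    simp
  · rw [← hErange, ← Nat.card_coe_set_eq, Nat.card_range_of_injective hEinj]
    simp

lemma step_lemma {V : Type*} [Fintype V] {G : SimpleGraph V} {ℓ : ℕ} (hℓ : 5 ≤ ℓ)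
    {C Hs : G.Subgraph} (hC : IsCycleSubgraph G ℓ C)
    (hne : ¬ C ≤ Hs) (hshare : (C.edgeSet ∩ Hs.edgeSet).Nonempty) :
    ((((ℓ : ℤ) - 1) * (Hs ⊔ C).verts.ncard - ((ℓ : ℤ) - 2) * (Hs ⊔ C).edgeSet.ncard)
      ≤ (((ℓ : ℤ) - 1) * Hs.verts.ncard - ((ℓ : ℤ) - 2) * Hs.edgeSet.ncard)) ∧
    (((Hs ⊔ C).verts \ Hs.verts).ncard = 1 →
      ((((ℓ : ℤ) - 1) * (Hs ⊔ C).verts.ncard - ((ℓ : ℤ) - 2) * (Hs ⊔ C).edgeSet.ncard)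
        ≤ (((ℓ : ℤ) - 1) * Hs.verts.ncard - ((ℓ : ℤ) - 2) * Hs.edgeSet.ncard)
          - ((ℓ : ℤ) - 3))) := by
  classical
  obtain ⟨⟨hab, hbl⟩, hvc, hec⟩ := key_lemma hℓ hC hne hshare
  set a := (C.verts \ Hs.verts).ncard with ha
  set b := (C.edgeSet \ Hs.edgeSet).ncard with hb
  have hvd : ((Hs ⊔ C).verts \ Hs.verts) = C.verts \ Hs.verts := by
    rw [Subgraph.verts_sup, Set.union_diff_left]
  have hv : (Hs ⊔ C).verts.ncard = Hs.verts.ncard + a := by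
    rw [Subgraph.verts_sup, ← Set.union_diff_self,
      Set.ncard_union_eq Set.disjoint_sdiff_right (Set.toFinite _) (Set.toFinite _)]
  have he : (Hs ⊔ C).edgeSet.ncard = Hs.edgeSet.ncard + b := by
    rw [Subgraph.edgeSet_sup, ← Set.union_diff_self,
      Set.ncard_union_eq Set.disjoint_sdiff_right (Set.toFinite _) (Set.toFinite _)]
  rw [hv, he, hvd]
  have hl5 : (5 : ℤ) ≤ (ℓ : ℤ) := by exact_mod_cast hℓ
  have hab' : (a : ℤ) + 1 ≤ (b : ℤ) := by exact_mod_cast hab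
  have hbl' : (b : ℤ) ≤ (ℓ : ℤ) - 1 := by
    have : (b : ℤ) < (ℓ : ℤ) := by exact_mod_cast hbl
    omega
  have hint1 : (0:ℤ) ≤ ((ℓ:ℤ) - 2) * ((b:ℤ) - (a:ℤ) - 1) :=
    mul_nonneg (by linarith only [hl5]) (by linarith only [hab'])
  constructor
  · push_cast
    linarith only [hint1, hab', hbl', hl5]
  · intro h1
    have ha1 : (a : ℤ) = 1 := by exact_mod_cast h1
    have hb2 : (2 : ℤ) ≤ (b : ℤ) := by linarith only [hab', ha1]
    have hint2 : (0:ℤ) ≤ ((ℓ:ℤ) - 2) * ((b:ℤ) - 2) :=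
      mul_nonneg (by linarith only [hl5]) (by linarith only [hb2])
    push_cast
    rw [ha1]
    linarith only [hint2, hb2, hl5]

/-- `(H 1, …, H t)` is a construction sequence of `ℓ`-cycles in `G`: `H 1` is an
`ℓ`-cycle of `G` and each `H (i+1)` is obtained from `H i` by adding an `ℓ`-cycle `C`
of `G` with `C ⊄ H i` and `E(C) ∩ E(H i) ≠ ∅`. -/
def IsConstructionSeq {V : Type*} (G : SimpleGraph V) (ℓ t : ℕ)
    (H : ℕ → G.Subgraph) : Prop :=
  1 ≤ t ∧ IsCycleSubgraph G ℓ (H 1) ∧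
    ∀ i, 1 ≤ i → i < t → ∃ C : G.Subgraph, IsCycleSubgraph G ℓ C ∧
      ¬ C ≤ H i ∧ (C.edgeSet ∩ (H i).edgeSet).Nonempty ∧ H (i + 1) = H i ⊔ C

/-- In a construction sequence of `ℓ`-cycles in a graph `G` with `m(G) < (ℓ-1)/(ℓ-2)`,
at most two steps add exactly one new vertex (configuration `(A_{ℓ-1})` appears at
most twice). -/
theorem configuration_A_ell_minus_one_at_most_twice {V : Type*} [Fintype V]
    (ℓ : ℕ) (hℓ : 5 ≤ ℓ) (G : SimpleGraph V)
    (hG : ∀ J : G.Subgraph, J.verts.Nonempty →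
      (ℓ - 2) * J.edgeSet.ncard < (ℓ - 1) * J.verts.ncard)
    (t : ℕ) (H : ℕ → G.Subgraph) (hH : IsConstructionSeq G ℓ t H) :
    {i : ℕ | 1 ≤ i ∧ i < t ∧ ((H (i + 1)).verts \ (H i).verts).ncard = 1}.ncard ≤ 2 := by
  classical
  obtain ⟨ht1, hcyc, hseq⟩ := hH
  set P : G.Subgraph → ℤ :=
    fun J => ((ℓ : ℤ) - 1) * J.verts.ncard - ((ℓ : ℤ) - 2) * J.edgeSet.ncard with hP
  have hl5 : (5 : ℤ) ≤ (ℓ : ℤ) := by exact_mod_cast hℓ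
  -- each step decreases P, and by at least ℓ - 3 at special steps
  have hdec : ∀ i, 1 ≤ i → i < t → P (H (i + 1)) ≤ P (H i) ∧
      (((H (i + 1)).verts \ (H i).verts).ncard = 1 →
        P (H (i + 1)) ≤ P (H i) - ((ℓ : ℤ) - 3)) := by
    intro i h1 h2
    obtain ⟨C, hC, hne, hshare, hsup⟩ := hseq i h1 h2
    rw [hsup]
    exact step_lemma hℓ hC hne hshare
  -- nonemptiness of vertex sets
  have hvne : ∀ j, 1 ≤ j → j ≤ t → (H j).verts.Nonempty := by
    intro j
    induction j with
    | zero => omega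
    | succ j ih =>
      intro _ hjt
      rcases Nat.eq_or_lt_of_le (show 1 ≤ j + 1 by omega) with h | h
      · rw [← h]
        exact (cycle_card hℓ hcyc).2.2
      · obtain ⟨C, _, _, _, hsup⟩ := hseq j (by omega) (by omega)
        obtain ⟨v, hv⟩ := ih (by omega) (by omega)
        exact ⟨v, by rw [hsup, Subgraph.verts_sup]; exact Set.mem_union_left _ hv⟩
  -- monotonicity of P
  have hmono : ∀ j i, 1 ≤ i → i ≤ j → j ≤ t → P (H j) ≤ P (H i) := by
    intro j
    induction j with
    | zero => intro i h1 h2 _; omega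
    | succ j ih =>
      intro i h1 h2 h3
      rcases Nat.eq_or_lt_of_le h2 with h | h
      · rw [h]
      · have hij : i ≤ j := by omega
        have := (hdec j (by omega) (by omega)).1
        exact this.trans (ih i h1 hij (by omega))
  -- value at the start and end
  have hstart : P (H 1) = (ℓ : ℤ) := by
    obtain ⟨hv, he, -⟩ := cycle_card hℓ hcyc
    rw [hP]
    simp only [hv, he]
    ring
  have hend : 1 ≤ P (H t) := by
    have h1 := hG (H t) (hvne t ht1 le_rfl)
    have h2 : ((ℓ - 2 : ℕ) : ℤ) = (ℓ : ℤ) - 2 := by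
      rw [Nat.cast_sub (by omega)]; norm_num
    have h3 : ((ℓ - 1 : ℕ) : ℤ) = (ℓ : ℤ) - 1 := by
      rw [Nat.cast_sub (by omega)]; norm_num
    have h4 : ((ℓ - 2 : ℕ) * (H t).edgeSet.ncard : ℤ) < ((ℓ - 1 : ℕ) * (H t).verts.ncard : ℤ) := by
      exact_mod_cast h1
    rw [h2, h3] at h4
    have h5 := Int.add_one_le_iff.mpr h4
    simp only [hP]
    linarith only [h5]
  -- suppose there are at least three special indices
  by_contra hcon
  push_neg at hcon
  set F := {i : ℕ | 1 ≤ i ∧ i < t ∧ ((H (i + 1)).verts \ (H i).verts).ncard = 1} with hF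
  have hFfin : F.Finite := (Set.finite_Iio t).subset (fun i hi => hi.2.1)
  have hcard : 3 ≤ hFfin.toFinset.card := by
    rw [← Set.ncard_eq_toFinset_card F hFfin]
    omega
  set s1 := hFfin.toFinset with hs1
  have hs1ne : s1.Nonempty := Finset.card_pos.mp (by omega)
  set i3 := s1.max' hs1ne with hi3
  have hi3s : i3 ∈ s1 := s1.max'_mem hs1ne
  set s2 := s1.erase i3 with hs2
  have hs2card : 2 ≤ s2.card := by
    rw [hs2, Finset.card_erase_of_mem hi3s]; omega
  have hs2ne : s2.Nonempty := Finset.card_pos.mp (by omega)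
  set i2 := s2.max' hs2ne with hi2
  have hi2s2 : i2 ∈ s2 := s2.max'_mem hs2ne
  set s3 := s2.erase i2 with hs3
  have hs3card : 1 ≤ s3.card := by
    rw [hs3, Finset.card_erase_of_mem hi2s2]; omega
  have hs3ne : s3.Nonempty := Finset.card_pos.mp (by omega)
  set i1 := s3.max' hs3ne with hi1
  have hi1s3 : i1 ∈ s3 := s3.max'_mem hs3ne
  have hi1s2 : i1 ∈ s2 := Finset.mem_of_mem_erase hi1s3
  have hi2s1 : i2 ∈ s1 := Finset.mem_of_mem_erase hi2s2
  have hi1s1 : i1 ∈ s1 := Finset.mem_of_mem_erase hi1s2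
  have h12 : i1 < i2 :=
    lt_of_le_of_ne (s2.le_max' i1 hi1s2) (Finset.ne_of_mem_erase hi1s3)
  have h23 : i2 < i3 :=
    lt_of_le_of_ne (s1.le_max' i2 hi2s1) (Finset.ne_of_mem_erase hi2s2)
  have hmem : ∀ i ∈ s1, 1 ≤ i ∧ i < t ∧ ((H (i + 1)).verts \ (H i).verts).ncard = 1 := by
    intro i hi
    rw [hs1, Set.Finite.mem_toFinset] at hi
    exact hi
  obtain ⟨ha1, ha2, ha3⟩ := hmem i1 hi1s1
  obtain ⟨hb1, hb2, hb3⟩ := hmem i2 hi2s1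
  obtain ⟨hc1, hc2, hc3⟩ := hmem i3 hi3s
  -- chain the inequalities
  have e1 : P (H (i1 + 1)) ≤ P (H i1) - ((ℓ : ℤ) - 3) := (hdec i1 ha1 ha2).2 ha3
  have e2 : P (H (i2 + 1)) ≤ P (H i2) - ((ℓ : ℤ) - 3) := (hdec i2 hb1 hb2).2 hb3
  have e3 : P (H (i3 + 1)) ≤ P (H i3) - ((ℓ : ℤ) - 3) := (hdec i3 hc1 hc2).2 hc3
  have m1 : P (H i1) ≤ P (H 1) := hmono i1 1 le_rfl ha1 (by omega)
  have m2 : P (H i2) ≤ P (H (i1 + 1)) := hmono i2 (i1 + 1) (by omega) (by omega) (by omega)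
  have m3 : P (H i3) ≤ P (H (i2 + 1)) := hmono i3 (i2 + 1) (by omega) (by omega) (by omega)
  have m4 : P (H t) ≤ P (H (i3 + 1)) := hmono t (i3 + 1) (by omega) (by omega) (by omega)
  rw [hstart] at m1
  linarith only [e1, e2, e3, m1, m2, m3, m4, hend, hl5]
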